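/- Let d ≥ 2 and let (G_n), G_n = (V_n, E_n), be any sequence of finite d-regular graphs with |V_n| → ∞. If p < 1/(d−1), then for every c > 0 the probability that the random subgraph G_n(p) contains a connected component with at least c·|V_n| vertices tends to 0 as n → ∞. -/

import Mathlib

open Filter Topology
open scoped Classical

noncomputable section

variable {V : Type*}

/-- Probability that the random subgraph `G(p)` lies in the event `A`. -/
noncomputable def percProb [Fintype V] [DecidableEq V] (G : SimpleGraph V) [DecidableRel G.Adj]
    (p : ℝ) (A : Set (Finset (Sym2 V))) : ℝ :=
  ∑ F ∈ G.edgeFinset.powerset,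
    if F ∈ A then p ^ F.card * (1 - p) ^ (G.edgeFinset.card - F.card) else 0

/-- Number of vertices in the component of `v` in the spanning subgraph with edge set `F`. -/
noncomputable def compCard [Fintype V] (F : Finset (Sym2 V)) (v : V) : ℕ :=
  Set.ncard {w | (SimpleGraph.fromEdgeSet (↑F : Set (Sym2 V))).Reachable v w}

/-- The ball of radius `r` around `w`. -/
def ball (G : SimpleGraph V) (w : V) (r : ℕ) : Set V :=
  {v | ∃ q : G.Walk w v, q.length ≤ r}

/-- The ball of radius `r` around a set `A`. -/
def setBall (G : SimpleGraph V) (A : Set V) (r : ℕ) : Set V :=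
  {v | ∃ u ∈ A, ∃ q : G.Walk u v, q.length ≤ r}

/-- `G` is a vertex `b`-expander. -/
def VertexExpander [Fintype V] (G : SimpleGraph V) (b : ℝ) : Prop :=
  ∀ A : Finset V, 0 < A.card → (A.card : ℝ) ≤ Fintype.card V / 2 →
    b * A.card ≤ (Set.ncard {v | v ∉ A ∧ ∃ u ∈ A, G.Adj u v} : ℝ)

/-- The set of edges of `G` with exactly one endpoint in `A`. -/
def edgeBoundary (G : SimpleGraph V) (A : Set V) : Set (Sym2 V) :=
  {e | e ∈ G.edgeSet ∧ ∃ u v : V, e = s(u, v) ∧ u ∈ A ∧ v ∉ A}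

/-- `G` is an edge `b`-expander. -/
def EdgeExpander [Fintype V] (G : SimpleGraph V) (b : ℝ) : Prop :=
  ∀ A : Finset V, 0 < A.card → (A.card : ℝ) ≤ Fintype.card V / 2 →
    b * A.card ≤ ((edgeBoundary G ↑A).ncard : ℝ)

/-- `e` is an `L`-bridge for configuration `F` (largeness threshold `c * |V|`). -/
def IsLBridge [Fintype V] (G : SimpleGraph V) (c : ℝ) (F : Finset (Sym2 V)) (e : Sym2 V) : Prop :=
  e ∈ G.edgeSet ∧ ∃ u v : V, e = s(u, v) ∧
    ¬ (SimpleGraph.fromEdgeSet (↑(F.erase e) : Set (Sym2 V))).Reachable u v ∧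
    c * Fintype.card V ≤ (compCard (F.erase e) u : ℝ) ∧
    c * Fintype.card V ≤ (compCard (F.erase e) v : ℝ)

/-- `F` has more than one component with at least `s` vertices. -/
def TwoLargeComponents [Fintype V] (F : Finset (Sym2 V)) (s : ℝ) : Prop :=
  ∃ v w : V, ¬ (SimpleGraph.fromEdgeSet (↑F : Set (Sym2 V))).Reachable v w ∧
    s ≤ (compCard F v : ℝ) ∧ s ≤ (compCard F w : ℝ)

/-- The edge-isoperimetric number (Cheeger constant) of `G`. -/
noncomputable def isoNumber [Fintype V] (G : SimpleGraph V) : ℝ :=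
  sInf {x : ℝ | ∃ A : Finset V, 0 < A.card ∧ (A.card : ℝ) ≤ Fintype.card V / 2 ∧
    x = ((edgeBoundary G ↑A).ncard : ℝ) / A.card}




section aux
variable [Fintype V] [DecidableEq V] (G : SimpleGraph V) [DecidableRel G.Adj] {p : ℝ}

lemma binom_sum {α : Type*} [DecidableEq α] (p q : ℝ) (T : Finset α) :
    ∑ F ∈ T.powerset, p ^ F.card * q ^ (T.card - F.card) = (p + q) ^ T.card := by
  induction T using Finset.induction_on with
  | empty => simp
  | @insert a s ha ih =>
    rw [Finset.sum_powerset_insert ha]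
    have h1 : ∀ F ∈ s.powerset, p ^ F.card * q ^ ((insert a s).card - F.card)
        = q * (p ^ F.card * q ^ (s.card - F.card)) := by
      intro F hF
      rw [Finset.card_insert_of_notMem ha,
        Nat.sub_add_comm (Finset.card_le_card (Finset.mem_powerset.1 hF)), pow_succ]
      ring
    have h2 : ∀ F ∈ s.powerset, p ^ (insert a F).card * q ^ ((insert a s).card - (insert a F).card)
        = p * (p ^ F.card * q ^ (s.card - F.card)) := by
      intro F hF
      have haF : a ∉ F := fun h => ha (Finset.mem_powerset.1 hF h)
      rw [Finset.card_insert_of_notMem ha, Finset.card_insert_of_notMem haF,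
        Nat.succ_sub_succ, pow_succ]
      ring
    rw [Finset.sum_congr rfl h1, Finset.sum_congr rfl h2, ← Finset.mul_sum, ← Finset.mul_sum, ih,
      Finset.card_insert_of_notMem ha, pow_succ]
    ring

lemma percProb_nonneg (hp0 : 0 ≤ p) (hp1 : p ≤ 1) (A : Set (Finset (Sym2 V))) :
    0 ≤ percProb G p A := by
  apply Finset.sum_nonneg
  intro F _
  split
  · exact mul_nonneg (pow_nonneg hp0 _) (pow_nonneg (by linarith) _)
  · exact le_rfl

lemma percProb_superset (hp0 : 0 ≤ p) {S : Finset (Sym2 V)} (hS : S ⊆ G.edgeFinset) :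
    percProb G p {F | S ⊆ F} = p ^ S.card := by
  classical
  unfold percProb
  refine Eq.trans (Finset.sum_congr rfl fun F _ => @if_congr _ _ (S ⊆ F) (Classical.propDecidable _) _ _ _ _ _ Iff.rfl rfl rfl) ?_
  rw [← Finset.sum_filter]
  have hre : G.edgeFinset.powerset.filter (fun F => S ⊆ F)
      = ((G.edgeFinset \ S).powerset).image (fun F' => S ∪ F') := by
    ext F
    simp only [Finset.mem_filter, Finset.mem_powerset, Finset.mem_image]
    constructor
    · rintro ⟨hFE, hSF⟩
      exact ⟨F \ S, Finset.sdiff_subset_sdiff hFE le_rfl, by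
        rw [Finset.union_sdiff_of_subset hSF]⟩
    · rintro ⟨F', hF', rfl⟩
      exact ⟨Finset.union_subset hS (hF'.trans Finset.sdiff_subset), Finset.subset_union_left⟩
  rw [hre, Finset.sum_image]
  · have hcongr : ∀ F' ∈ (G.edgeFinset \ S).powerset,
        p ^ (S ∪ F').card * (1 - p) ^ (G.edgeFinset.card - (S ∪ F').card)
        = p ^ S.card * (p ^ F'.card * (1 - p) ^ ((G.edgeFinset \ S).card - F'.card)) := by
      intro F' hF'
      rw [Finset.mem_powerset] at hF'
      have hdisj : Disjoint S F' := Finset.disjoint_left.2 fun a haS haF' =>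
        (Finset.mem_sdiff.1 (hF' haF')).2 haS
      rw [Finset.card_union_of_disjoint hdisj, Finset.card_sdiff_of_subset hS]
      have hSc : S.card ≤ G.edgeFinset.card := Finset.card_le_card hS
      have h1 : G.edgeFinset.card - (S.card + F'.card)
          = G.edgeFinset.card - S.card - F'.card := by omega
      rw [h1, pow_add]
      ring
    rw [Finset.sum_congr rfl hcongr, ← Finset.mul_sum, binom_sum]
    norm_num
  · intro a ha b hb hab
    rw [Finset.mem_coe, Finset.mem_powerset] at ha hb
    have hda : Disjoint S a := Finset.disjoint_left.2 fun x hxS hxa =>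
      (Finset.mem_sdiff.1 (ha hxa)).2 hxS
    have hdb : Disjoint S b := Finset.disjoint_left.2 fun x hxS hxb =>
      (Finset.mem_sdiff.1 (hb hxb)).2 hxS
    have h2 : (S ∪ a) \ S = (S ∪ b) \ S := by rw [show S ∪ a = S ∪ b from hab]
    rwa [Finset.union_sdiff_cancel_left hda, Finset.union_sdiff_cancel_left hdb] at h2

lemma percProb_le_weighted (hp0 : 0 ≤ p) (hp1 : p ≤ 1) {ι : Type*} (s : Finset ι)
    (A : Set (Finset (Sym2 V))) (B : ι → Set (Finset (Sym2 V))) (m : ℝ)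
    (h : ∀ F ∈ G.edgeFinset.powerset, F ∈ A →
      m ≤ ∑ i ∈ s, (B i).indicator (fun _ => (1:ℝ)) F) :
    m * percProb G p A ≤ ∑ i ∈ s, percProb G p (B i) := by
  unfold percProb
  rw [Finset.mul_sum, Finset.sum_comm (s := s)]
  apply Finset.sum_le_sum
  intro F hF
  have hw : (0:ℝ) ≤ p ^ F.card * (1 - p) ^ (G.edgeFinset.card - F.card) :=
    mul_nonneg (pow_nonneg hp0 _) (pow_nonneg (by linarith) _)
  have hterm : ∀ i, (if F ∈ B i then p ^ F.card * (1 - p) ^ (G.edgeFinset.card - F.card) else 0)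
      = (B i).indicator (fun _ => (1:ℝ)) F
        * (p ^ F.card * (1 - p) ^ (G.edgeFinset.card - F.card)) := by
    intro i
    by_cases hi : F ∈ B i
    · simp [Set.indicator_of_mem, hi]
    · simp [Set.indicator_of_notMem, hi]
  by_cases hFA : F ∈ A
  · rw [if_pos hFA]
    calc m * (p ^ F.card * (1 - p) ^ (G.edgeFinset.card - F.card))
        ≤ (∑ i ∈ s, (B i).indicator (fun _ => (1:ℝ)) F)
            * (p ^ F.card * (1 - p) ^ (G.edgeFinset.card - F.card)) :=
          mul_le_mul_of_nonneg_right (h F hF hFA) hw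
      _ = ∑ i ∈ s, (if F ∈ B i then p ^ F.card * (1 - p) ^ (G.edgeFinset.card - F.card) else 0) := by
          rw [Finset.sum_mul]
          exact (Finset.sum_congr rfl fun i _ => hterm i).symm
  · rw [if_neg hFA, mul_zero]
    refine Finset.sum_nonneg fun i _ => ?_
    rw [hterm i]
    exact mul_nonneg (Set.indicator_nonneg (fun _ _ => zero_le_one) F) hw

end aux

section paths
variable [Fintype V] [DecidableEq V] (G : SimpleGraph V) [DecidableRel G.Adj] {d : ℕ} {p : ℝ}
lemma getVert_mem_support {u v : V} (q : SimpleGraph.Walk G u v) (n : ℕ) :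
    q.getVert n ∈ q.support := by
  induction q generalizing n with
  | nil => simp [SimpleGraph.Walk.getVert]
  | cons h q ih =>
    cases n with
    | zero => simp
    | succ n =>
      rw [SimpleGraph.Walk.getVert_cons_succ, SimpleGraph.Walk.support_cons]
      exact List.mem_cons_of_mem _ (ih n)

/-- Paths starting at `x` of length at most `r`, as a sigma finset. -/
def pathsLE (x : V) (r : ℕ) : Finset (Σ w : V, G.Walk x w) :=
  Finset.univ.sigma fun w => (G.finsetWalkLengthLT (r+1) x w).filter SimpleGraph.Walk.IsPath

lemma mem_pathsLE {x : V} {r : ℕ} {π : Σ w : V, G.Walk x w} :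
    π ∈ pathsLE G x r ↔ π.2.length ≤ r ∧ π.2.IsPath := by
  obtain ⟨w, q⟩ := π
  rw [pathsLE, Finset.mem_sigma, Finset.mem_filter]
  simp [SimpleGraph.mem_finsetWalkLengthLT_iff, Nat.lt_succ_iff]

lemma sigma_eq_nil_of_length_zero {x : V} (π : Σ w : V, G.Walk x w) (h : π.2.length = 0) :
    π = ⟨x, SimpleGraph.Walk.nil⟩ := by
  obtain ⟨w, q⟩ := π
  obtain rfl : x = w := q.eq_of_length_eq_zero h
  have : q = SimpleGraph.Walk.nil :=
    (SimpleGraph.Walk.nil_iff_length_eq.2 h).eq_nil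
  rw [this]

/-- Reconstruct a sigma-walk from its decomposition. -/
def mkW (x : V) (z : Σ y : V, Σ w : V, G.Walk y w) (h : G.Adj x z.1) :
    Σ w : V, G.Walk x w :=
  ⟨z.2.1, SimpleGraph.Walk.cons h z.2.2⟩

lemma mkW_congr (x : V) (z z' : Σ y : V, Σ w : V, G.Walk y w) (h : G.Adj x z.1)
    (h' : G.Adj x z'.1) (hzz : z = z') : mkW G x z h = mkW G x z' h' := by
  subst hzz; rfl

variable {d : ℕ} {p : ℝ}

/-- The decomposition map. -/
def decomp (x : V) (π : Σ w : V, G.Walk x w) : Σ y : V, Σ w : V, G.Walk y w :=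
  ⟨π.2.getVert 1, ⟨π.1, π.2.tail⟩⟩

lemma mkW_decomp (x : V) (π : Σ w : V, G.Walk x w) (hnil : ¬ π.2.Nil) :
    mkW G x (decomp G x π) (π.2.adj_snd hnil) = π := by
  obtain ⟨w, q⟩ := π
  exact congrArg (Sigma.mk w) (q.cons_tail_eq hnil)

lemma decomp_injOn (x : V) {s : Finset (Σ w : V, G.Walk x w)}
    (hs : ∀ π ∈ s, ¬ π.2.Nil) :
    ∀ a ∈ s, ∀ b ∈ s, decomp G x a = decomp G x b → a = b := by
  intro a ha b hb hab
  have hna := hs a ha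
  have hnb := hs b hb
  calc a = mkW G x (decomp G x a) (a.2.adj_snd hna) := (mkW_decomp G x a hna).symm
    _ = mkW G x (decomp G x b) (b.2.adj_snd hnb) := mkW_congr G x _ _ _ _ hab
    _ = b := mkW_decomp G x b hnb

lemma sum_len0_le_one (hp0 : 0 ≤ p) (x : V) (s : Finset (Σ w : V, G.Walk x w))
    (h : ∀ π ∈ s, π.2.length = 0) :
    ∑ π ∈ s, p ^ π.2.length ≤ 1 := by
  have hsub : s ⊆ {⟨x, SimpleGraph.Walk.nil⟩} := by
    intro π hπ
    rw [Finset.mem_singleton]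
    exact sigma_eq_nil_of_length_zero G π (h π hπ)
  calc ∑ π ∈ s, p ^ π.2.length
      ≤ ∑ π ∈ ({⟨x, SimpleGraph.Walk.nil⟩} : Finset (Σ w : V, G.Walk x w)), p ^ π.2.length :=
        Finset.sum_le_sum_of_subset_of_nonneg hsub fun π _ _ => pow_nonneg hp0 _
    _ = 1 := by simp

lemma key_step (hreg : G.IsRegularOfDegree d) (hd1 : 1 ≤ d) (hp0 : 0 ≤ p)
    (r : ℕ) (x u : V) (hxu : G.Adj x u)
    (ih : ∀ y : V, G.Adj y x →
      ∑ π ∈ (pathsLE G y r).filter (fun π => π.2.getVert 1 ≠ x), p ^ π.2.length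
        ≤ ∑ k ∈ Finset.range (r+1), (((d:ℝ) - 1) * p) ^ k)
    (S1 : Finset (Σ w : V, G.Walk x w))
    (hs : ∀ π ∈ S1, π.2.length ≤ r+1 ∧ π.2.IsPath ∧ π.2.getVert 1 ≠ u ∧ π.2.length ≠ 0) :
    ∑ π ∈ S1, p ^ π.2.length
      ≤ ((d:ℝ) - 1) * p * ∑ k ∈ Finset.range (r+1), (((d:ℝ) - 1) * p) ^ k := by
  set T : Finset (Σ y : V, Σ w : V, G.Walk y w) :=
    ((G.neighborFinset x).erase u).sigma
      (fun y => (pathsLE G y r).filter (fun π' => π'.2.getVert 1 ≠ x)) with hT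
  have hnil : ∀ π ∈ S1, ¬ π.2.Nil := by
    intro π hπ
    exact fun h => (hs π hπ).2.2.2 (SimpleGraph.Walk.nil_iff_length_eq.1 h)
  have hmem : ∀ π ∈ S1, decomp G x π ∈ T := by
    intro π hπ
    have hn := hnil π hπ
    obtain ⟨hlen, hpath, hgv, hlen0⟩ := hs π hπ
    rw [hT, Finset.mem_sigma]
    constructor
    · exact Finset.mem_erase.2 ⟨hgv, (SimpleGraph.mem_neighborFinset G x _).2
        (π.2.adj_snd hn)⟩
    · rw [Finset.mem_filter, mem_pathsLE]
      show (π.2.tail.length ≤ r ∧ π.2.tail.IsPath) ∧ π.2.tail.getVert 1 ≠ x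
      have hlt : π.2.tail.length + 1 = π.2.length := SimpleGraph.Walk.length_tail_add_one hn
      have hxs : x ∉ π.2.tail.support := by
        have hcons : x :: π.2.tail.support = π.2.support :=
          SimpleGraph.Walk.cons_support_tail hn
        have hnodup := hpath.support_nodup
        rw [← hcons, List.nodup_cons] at hnodup
        exact hnodup.1
      refine ⟨⟨by omega, hpath.tail⟩, ?_⟩
      intro hcontra
      have hgm := getVert_mem_support G π.2.tail 1
      rw [hcontra] at hgm
      exact hxs hgm
  have hval : ∀ π ∈ S1, p ^ π.2.length = p * p ^ (decomp G x π).2.2.length := by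
    intro π hπ
    have hn := hnil π hπ
    have hlt : π.2.tail.length + 1 = π.2.length := SimpleGraph.Walk.length_tail_add_one hn
    rw [decomp, ← hlt, pow_succ]
    ring
  have hsub : S1.image (decomp G x) ⊆ T := by
    intro z hz
    obtain ⟨π, hπ, rfl⟩ := Finset.mem_image.1 hz
    exact hmem π hπ
  calc ∑ π ∈ S1, p ^ π.2.length
      = ∑ π ∈ S1, (fun z : Σ y : V, Σ w : V, G.Walk y w => p * p ^ z.2.2.length)
          (decomp G x π) := Finset.sum_congr rfl hval
    _ = ∑ z ∈ S1.image (decomp G x), p * p ^ z.2.2.length :=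
        (Finset.sum_image (f := fun z : Σ y : V, Σ w : V, G.Walk y w => p * p ^ z.2.2.length)
          (decomp_injOn G x hnil)).symm
    _ ≤ ∑ z ∈ T, p * p ^ z.2.2.length :=
        Finset.sum_le_sum_of_subset_of_nonneg hsub
          fun z _ _ => mul_nonneg hp0 (pow_nonneg hp0 _)
    _ = ∑ y ∈ (G.neighborFinset x).erase u,
          ∑ π' ∈ (pathsLE G y r).filter (fun π' => π'.2.getVert 1 ≠ x),
            p * p ^ π'.2.length := by
        rw [hT, Finset.sum_sigma]
    _ ≤ ∑ y ∈ (G.neighborFinset x).erase u,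
          p * ∑ k ∈ Finset.range (r+1), (((d:ℝ) - 1) * p) ^ k := by
        apply Finset.sum_le_sum
        intro y hy
        rw [← Finset.mul_sum]
        have hyx : G.Adj y x :=
          ((SimpleGraph.mem_neighborFinset G x y).1 (Finset.mem_of_mem_erase hy)).symm
        exact mul_le_mul_of_nonneg_left (ih y hyx) hp0
    _ = ((d:ℝ) - 1) * p * ∑ k ∈ Finset.range (r+1), (((d:ℝ) - 1) * p) ^ k := by
        rw [Finset.sum_const, nsmul_eq_mul]
        have hcard : ((G.neighborFinset x).erase u).card = d - 1 := by
          rw [Finset.card_erase_of_mem ((SimpleGraph.mem_neighborFinset G x u).2 hxu)]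
          rw [SimpleGraph.card_neighborFinset_eq_degree, hreg x]
        rw [hcard, Nat.cast_sub hd1, Nat.cast_one]
        ring

lemma key_avoid (hreg : G.IsRegularOfDegree d) (hd1 : 1 ≤ d) (hp0 : 0 ≤ p) :
    ∀ r : ℕ, ∀ x u : V, G.Adj x u →
      ∑ π ∈ (pathsLE G x r).filter (fun π => π.2.getVert 1 ≠ u), p ^ π.2.length
        ≤ ∑ k ∈ Finset.range (r+1), (((d:ℝ) - 1) * p) ^ k := by
  intro r
  induction r with
  | zero =>
    intro x u hxu
    have h1 : ∑ π ∈ (pathsLE G x 0).filter (fun π => π.2.getVert 1 ≠ u), p ^ π.2.length ≤ 1 := by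
      apply sum_len0_le_one G hp0 x
      intro π hπ
      rw [Finset.mem_filter, mem_pathsLE] at hπ
      exact Nat.le_zero.1 hπ.1.1
    calc _ ≤ (1:ℝ) := h1
      _ ≤ _ := by simp
  | succ r ih =>
    intro x u hxu
    have hsplit := Finset.sum_filter_add_sum_filter_not
      ((pathsLE G x (r+1)).filter (fun π => π.2.getVert 1 ≠ u))
      (fun π => π.2.length = 0) (fun π => p ^ π.2.length)
    rw [← hsplit]
    have hstep := key_step G hreg hd1 hp0 r x u hxu (fun y hyx => ih y x hyx)
    refine le_trans (add_le_add
      (sum_len0_le_one G hp0 x _ (fun π hπ => (Finset.mem_filter.1 hπ).2))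
      (hstep _ (fun π hπ => ?_))) ?_
    · rw [Finset.mem_filter, Finset.mem_filter, mem_pathsLE] at hπ
      exact ⟨hπ.1.1.1, hπ.1.1.2, hπ.1.2, hπ.2⟩
    · conv_rhs => rw [geom_sum_succ]
      linarith


lemma key_step2 (hreg : G.IsRegularOfDegree d) (hd1 : 1 ≤ d) (hp0 : 0 ≤ p)
    (r : ℕ) (x : V)
    (ih : ∀ y : V, G.Adj y x →
      ∑ π ∈ (pathsLE G y r).filter (fun π => π.2.getVert 1 ≠ x), p ^ π.2.length
        ≤ ∑ k ∈ Finset.range (r+1), (((d:ℝ) - 1) * p) ^ k)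
    (S1 : Finset (Σ w : V, G.Walk x w))
    (hs : ∀ π ∈ S1, π.2.length ≤ r+1 ∧ π.2.IsPath ∧ π.2.length ≠ 0) :
    ∑ π ∈ S1, p ^ π.2.length
      ≤ (d:ℝ) * p * ∑ k ∈ Finset.range (r+1), (((d:ℝ) - 1) * p) ^ k := by
  set T : Finset (Σ y : V, Σ w : V, G.Walk y w) :=
    (G.neighborFinset x).sigma
      (fun y => (pathsLE G y r).filter (fun π' => π'.2.getVert 1 ≠ x)) with hT
  have hnil : ∀ π ∈ S1, ¬ π.2.Nil := by
    intro π hπ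
    exact fun h => (hs π hπ).2.2 (SimpleGraph.Walk.nil_iff_length_eq.1 h)
  have hmem : ∀ π ∈ S1, decomp G x π ∈ T := by
    intro π hπ
    have hn := hnil π hπ
    obtain ⟨hlen, hpath, hlen0⟩ := hs π hπ
    rw [hT, Finset.mem_sigma]
    constructor
    · exact (SimpleGraph.mem_neighborFinset G x _).2 (π.2.adj_snd hn)
    · rw [Finset.mem_filter, mem_pathsLE]
      show (π.2.tail.length ≤ r ∧ π.2.tail.IsPath) ∧ π.2.tail.getVert 1 ≠ x
      have hlt : π.2.tail.length + 1 = π.2.length := SimpleGraph.Walk.length_tail_add_one hn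
      have hxs : x ∉ π.2.tail.support := by
        have hcons : x :: π.2.tail.support = π.2.support :=
          SimpleGraph.Walk.cons_support_tail hn
        have hnodup := hpath.support_nodup
        rw [← hcons, List.nodup_cons] at hnodup
        exact hnodup.1
      refine ⟨⟨by omega, hpath.tail⟩, ?_⟩
      intro hcontra
      have hgm := getVert_mem_support G π.2.tail 1
      rw [hcontra] at hgm
      exact hxs hgm
  have hval : ∀ π ∈ S1, p ^ π.2.length = p * p ^ (decomp G x π).2.2.length := by
    intro π hπ
    have hn := hnil π hπ
    have hlt : π.2.tail.length + 1 = π.2.length := SimpleGraph.Walk.length_tail_add_one hn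
    rw [decomp, ← hlt, pow_succ]
    ring
  have hsub : S1.image (decomp G x) ⊆ T := by
    intro z hz
    obtain ⟨π, hπ, rfl⟩ := Finset.mem_image.1 hz
    exact hmem π hπ
  calc ∑ π ∈ S1, p ^ π.2.length
      = ∑ π ∈ S1, (fun z : Σ y : V, Σ w : V, G.Walk y w => p * p ^ z.2.2.length)
          (decomp G x π) := Finset.sum_congr rfl hval
    _ = ∑ z ∈ S1.image (decomp G x), p * p ^ z.2.2.length :=
        (Finset.sum_image (f := fun z : Σ y : V, Σ w : V, G.Walk y w => p * p ^ z.2.2.length)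
          (decomp_injOn G x hnil)).symm
    _ ≤ ∑ z ∈ T, p * p ^ z.2.2.length :=
        Finset.sum_le_sum_of_subset_of_nonneg hsub
          fun z _ _ => mul_nonneg hp0 (pow_nonneg hp0 _)
    _ = ∑ y ∈ G.neighborFinset x,
          ∑ π' ∈ (pathsLE G y r).filter (fun π' => π'.2.getVert 1 ≠ x),
            p * p ^ π'.2.length := by
        rw [hT, Finset.sum_sigma]
    _ ≤ ∑ y ∈ G.neighborFinset x,
          p * ∑ k ∈ Finset.range (r+1), (((d:ℝ) - 1) * p) ^ k := by
        apply Finset.sum_le_sum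
        intro y hy
        rw [← Finset.mul_sum]
        have hyx : G.Adj y x := ((SimpleGraph.mem_neighborFinset G x y).1 hy).symm
        exact mul_le_mul_of_nonneg_left (ih y hyx) hp0
    _ = (d:ℝ) * p * ∑ k ∈ Finset.range (r+1), (((d:ℝ) - 1) * p) ^ k := by
        rw [Finset.sum_const, nsmul_eq_mul]
        have hcard : (G.neighborFinset x).card = d := by
          rw [SimpleGraph.card_neighborFinset_eq_degree, hreg x]
        rw [hcard]
        ring

lemma sum_pathsLE_le (hreg : G.IsRegularOfDegree d) (hd1 : 1 ≤ d) (hp0 : 0 ≤ p)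
    (r : ℕ) (x : V) :
    ∑ π ∈ pathsLE G x r, p ^ π.2.length
      ≤ 1 + (d:ℝ) * p * ∑ k ∈ Finset.range (r+1), (((d:ℝ) - 1) * p) ^ k := by
  have hq0 : (0:ℝ) ≤ ((d:ℝ) - 1) * p := by
    apply mul_nonneg _ hp0
    have : (1:ℝ) ≤ (d:ℝ) := by exact_mod_cast hd1
    linarith
  have hB0 : ∀ m : ℕ, (0:ℝ) ≤ ∑ k ∈ Finset.range m, (((d:ℝ) - 1) * p) ^ k :=
    fun m => Finset.sum_nonneg fun k _ => pow_nonneg hq0 k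
  have hd0 : (0:ℝ) ≤ (d:ℝ) * p := mul_nonneg (Nat.cast_nonneg d) hp0
  cases r with
  | zero =>
    have h1 : ∑ π ∈ pathsLE G x 0, p ^ π.2.length ≤ 1 := by
      apply sum_len0_le_one G hp0 x
      intro π hπ
      rw [mem_pathsLE] at hπ
      exact Nat.le_zero.1 hπ.1
    have h2 : (0:ℝ) ≤ (d:ℝ) * p * ∑ k ∈ Finset.range (0+1), (((d:ℝ) - 1) * p) ^ k :=
      mul_nonneg hd0 (hB0 _)
    linarith
  | succ r =>
    have hsplit := Finset.sum_filter_add_sum_filter_not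
      (pathsLE G x (r+1)) (fun π => π.2.length = 0) (fun π => p ^ π.2.length)
    rw [← hsplit]
    have hstep := key_step2 G hreg hd1 hp0 r x
      (fun y hyx => key_avoid G hreg hd1 hp0 r y x hyx)
    have hmono : ∑ k ∈ Finset.range (r+1), (((d:ℝ) - 1) * p) ^ k
        ≤ ∑ k ∈ Finset.range (r+1+1), (((d:ℝ) - 1) * p) ^ k := by
      apply Finset.sum_le_sum_of_subset_of_nonneg
      · exact Finset.range_subset_range.2 (by omega)
      · intro k _ _
        exact pow_nonneg hq0 k
    refine le_trans (add_le_add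
      (sum_len0_le_one G hp0 x _ (fun π hπ => (Finset.mem_filter.1 hπ).2))
      (hstep _ (fun π hπ => ?_))) ?_
    · rw [Finset.mem_filter, mem_pathsLE] at hπ
      exact ⟨hπ.1.1, hπ.1.2, hπ.2⟩
    · nlinarith [mul_le_mul_of_nonneg_left hmono hd0]


end paths

section bridge
variable [Fintype V] [DecidableEq V] (G : SimpleGraph V) [DecidableRel G.Adj] {p : ℝ}

lemma compCard_eq_card_filter (F : Finset (Sym2 V)) (v : V) :
    (compCard F v : ℝ) = ((Finset.univ.filter fun w =>
      (SimpleGraph.fromEdgeSet (↑F : Set (Sym2 V))).Reachable v w).card : ℝ) := by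
  have h : {w | (SimpleGraph.fromEdgeSet (↑F : Set (Sym2 V))).Reachable v w}
      = ↑(Finset.univ.filter fun w =>
          (SimpleGraph.fromEdgeSet (↑F : Set (Sym2 V))).Reachable v w) := by
    ext w; simp
  rw [compCard, h, Set.ncard_coe_finset]

lemma reach_exists_path {F : Finset (Sym2 V)} (hF : F ⊆ G.edgeFinset) {v w : V}
    (h : (SimpleGraph.fromEdgeSet (↑F : Set (Sym2 V))).Reachable v w) :
    ∃ π ∈ (pathsLE G v (Fintype.card V)).filter (fun π => π.1 = w),
      π.2.edges.toFinset ⊆ F := by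
  obtain ⟨q⟩ := h
  have hq'path := q.bypass_isPath
  have hedgesF : ∀ e ∈ q.bypass.edges, e ∈ F := by
    intro e he
    have h1 := q.bypass.edges_subset_edgeSet he
    rw [SimpleGraph.edgeSet_fromEdgeSet] at h1
    exact h1.1
  have hedges : ∀ e ∈ q.bypass.edges, e ∈ G.edgeSet := by
    intro e he
    exact SimpleGraph.mem_edgeFinset.1 (hF (hedgesF e he))
  refine ⟨⟨w, q.bypass.transfer G hedges⟩, ?_, ?_⟩
  · rw [Finset.mem_filter, mem_pathsLE]
    refine ⟨⟨?_, hq'path.transfer hedges⟩, rfl⟩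
    rw [SimpleGraph.Walk.length_transfer]
    exact hq'path.length_lt.le
  · intro e he
    rw [List.mem_toFinset, SimpleGraph.Walk.edges_transfer] at he
    exact hedgesF e he

lemma percProb_reach_le (hp0 : 0 ≤ p) (hp1 : p ≤ 1) (v w : V) :
    percProb G p {F | (SimpleGraph.fromEdgeSet (↑F : Set (Sym2 V))).Reachable v w}
      ≤ ∑ π ∈ (pathsLE G v (Fintype.card V)).filter (fun π => π.1 = w), p ^ π.2.length := by
  have h := percProb_le_weighted G hp0 hp1
    ((pathsLE G v (Fintype.card V)).filter (fun π => π.1 = w))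
    {F | (SimpleGraph.fromEdgeSet (↑F : Set (Sym2 V))).Reachable v w}
    (fun π => {F | π.2.edges.toFinset ⊆ F}) 1 ?cond
  case cond =>
    intro F hFmem hFA
    obtain ⟨π, hπ, hπF⟩ := reach_exists_path G (Finset.mem_powerset.1 hFmem) hFA
    have hone : ({F' | π.2.edges.toFinset ⊆ F'} : Set (Finset (Sym2 V))).indicator
        (fun _ => (1:ℝ)) F = 1 := Set.indicator_of_mem hπF _
    calc (1:ℝ) = ({F' | π.2.edges.toFinset ⊆ F'} : Set (Finset (Sym2 V))).indicator
          (fun _ => (1:ℝ)) F := hone.symm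
      _ ≤ _ := Finset.single_le_sum
          (f := fun π' => ({F' | π'.2.edges.toFinset ⊆ F'} : Set (Finset (Sym2 V))).indicator
            (fun _ => (1:ℝ)) F)
          (fun i _ => Set.indicator_nonneg (fun _ _ => zero_le_one) F) hπ
  rw [one_mul] at h
  refine h.trans (Finset.sum_le_sum fun π hπ => ?_)
  rw [Finset.mem_filter, mem_pathsLE] at hπ
  have hsubE : π.2.edges.toFinset ⊆ G.edgeFinset := by
    intro e he
    rw [List.mem_toFinset] at he
    exact SimpleGraph.mem_edgeFinset.2 (π.2.edges_subset_edgeSet he)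
  rw [percProb_superset G hp0 hsubE]
  have hnodup : π.2.edges.Nodup := hπ.1.2.edges_nodup
  rw [List.toFinset_card_of_nodup hnodup, SimpleGraph.Walk.length_edges]

lemma geom_tail_bound {q : ℝ} (hq0 : 0 ≤ q) (hq1 : q < 1) (m : ℕ) :
    ∑ k ∈ Finset.range m, q ^ k ≤ 1 / (1 - q) := by
  have h1q : (0:ℝ) < 1 - q := by linarith
  induction m with
  | zero =>
    simp only [Finset.range_zero, Finset.sum_empty]
    exact le_of_lt (div_pos one_pos h1q)
  | succ m ih =>
    rw [geom_sum_succ]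
    have : q * ∑ k ∈ Finset.range m, q ^ k ≤ q * (1 / (1 - q)) :=
      mul_le_mul_of_nonneg_left ih hq0
    have heq : q * (1 / (1 - q)) + 1 = 1 / (1 - q) := by
      field_simp
      ring
    linarith

lemma main_bound {d : ℕ} (hreg : G.IsRegularOfDegree d) (hd : 2 ≤ d)
    (hp0 : 0 ≤ p) (hp : p < 1 / ((d : ℝ) - 1)) {c : ℝ} (hc : 0 < c)
    (hN : 1 ≤ Fintype.card V) :
    percProb G p {F | ∃ v : V, c * Fintype.card V ≤ (compCard F v : ℝ)}
      ≤ (1 + (d:ℝ) * p * (1 / (1 - ((d:ℝ) - 1) * p))) / c ^ 2 * ((Fintype.card V : ℝ))⁻¹ := by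
  have hd1 : 1 ≤ d := by omega
  have hdR : (1:ℝ) ≤ (d:ℝ) - 1 := by
    have : (2:ℝ) ≤ (d:ℝ) := by exact_mod_cast hd
    linarith
  have hq0 : (0:ℝ) ≤ ((d:ℝ) - 1) * p := mul_nonneg (by linarith) hp0
  have hq1 : ((d:ℝ) - 1) * p < 1 := by
    have hpos : (0:ℝ) < (d:ℝ) - 1 := by linarith
    calc ((d:ℝ) - 1) * p < ((d:ℝ) - 1) * (1 / ((d:ℝ) - 1)) :=
          mul_lt_mul_of_pos_left hp hpos
      _ = 1 := by field_simp
  have hp1 : p ≤ 1 := by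
    have h1 : 1 / ((d:ℝ) - 1) ≤ 1 := by
      rw [div_le_one (by linarith)]
      linarith
    linarith
  set N : ℕ := Fintype.card V with hNdef
  have hNpos : (0:ℝ) < (N:ℝ) := by exact_mod_cast hN
  have hcN : (0:ℝ) < c * N := mul_pos hc hNpos
  set C0 : ℝ := 1 + (d:ℝ) * p * (1 / (1 - ((d:ℝ) - 1) * p)) with hC0
  have hC0pos : (0:ℝ) < C0 := by
    have h1 : (0:ℝ) ≤ (d:ℝ) * p := mul_nonneg (Nat.cast_nonneg d) hp0
    have h2 : (0:ℝ) ≤ 1 / (1 - ((d:ℝ) - 1) * p) :=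
      le_of_lt (div_pos one_pos (by linarith))
    have := mul_nonneg h1 h2
    rw [hC0]; linarith
  -- Step 3 : for each v, sum over w of reach prob ≤ C0
  have hstep3 : ∀ v : V,
      ∑ w : V, percProb G p
        {F | (SimpleGraph.fromEdgeSet (↑F : Set (Sym2 V))).Reachable v w} ≤ C0 := by
    intro v
    have h1 : ∑ w : V, percProb G p
        {F | (SimpleGraph.fromEdgeSet (↑F : Set (Sym2 V))).Reachable v w}
        ≤ ∑ w : V, ∑ π ∈ (pathsLE G v N).filter (fun π => π.1 = w), p ^ π.2.length :=
      Finset.sum_le_sum fun w _ => percProb_reach_le G hp0 hp1 v w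
    have h2 : ∑ w : V, ∑ π ∈ (pathsLE G v N).filter (fun π => π.1 = w), p ^ π.2.length
        = ∑ π ∈ pathsLE G v N, p ^ π.2.length :=
      Finset.sum_fiberwise_of_maps_to (fun π _ => Finset.mem_univ π.1) _
    have h3 : ∑ π ∈ pathsLE G v N, p ^ π.2.length
        ≤ 1 + (d:ℝ) * p * ∑ k ∈ Finset.range (N+1), (((d:ℝ) - 1) * p) ^ k :=
      sum_pathsLE_le G hreg hd1 hp0 N v
    have h4 : ∑ k ∈ Finset.range (N+1), (((d:ℝ) - 1) * p) ^ k
        ≤ 1 / (1 - ((d:ℝ) - 1) * p) := geom_tail_bound hq0 hq1 (N+1)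
    have h5 : (0:ℝ) ≤ (d:ℝ) * p := mul_nonneg (Nat.cast_nonneg d) hp0
    have := mul_le_mul_of_nonneg_left h4 h5
    rw [hC0]
    linarith
  -- Step 2 : Markov for each v
  have hstep2 : ∀ v : V,
      percProb G p {F | c * N ≤ (compCard F v : ℝ)} ≤ C0 / (c * N) := by
    intro v
    have h := percProb_le_weighted G hp0 hp1 Finset.univ
      {F | c * N ≤ (compCard F v : ℝ)}
      (fun w => {F | (SimpleGraph.fromEdgeSet (↑F : Set (Sym2 V))).Reachable v w})
      (c * N) ?cond2
    case cond2 =>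
      intro F _ hFA
      rw [Set.mem_setOf_eq] at hFA
      refine le_trans (le_trans hFA (le_of_eq (compCard_eq_card_filter F v))) ?_
      have heq : ∀ w : V, ({F' | (SimpleGraph.fromEdgeSet (↑F : Set (Sym2 V))).Reachable v w} :
          Set (Finset (Sym2 V))).indicator (fun _ => (1:ℝ)) F
          = if (SimpleGraph.fromEdgeSet (↑F : Set (Sym2 V))).Reachable v w then (1:ℝ) else 0 := by
        intro w
        by_cases hr : (SimpleGraph.fromEdgeSet (↑F : Set (Sym2 V))).Reachable v w
        · rw [if_pos hr]
          exact Set.indicator_of_mem (show F ∈ ({F' |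
            (SimpleGraph.fromEdgeSet (↑F : Set (Sym2 V))).Reachable v w} :
            Set (Finset (Sym2 V))) from hr) _
        · rw [if_neg hr]
          exact Set.indicator_of_notMem (show F ∉ ({F' |
            (SimpleGraph.fromEdgeSet (↑F : Set (Sym2 V))).Reachable v w} :
            Set (Finset (Sym2 V))) from hr) _
      refine le_of_eq ?_
      calc ((Finset.univ.filter fun w =>
            (SimpleGraph.fromEdgeSet (↑F : Set (Sym2 V))).Reachable v w).card : ℝ)
          = ∑ w : V, (if (SimpleGraph.fromEdgeSet (↑F : Set (Sym2 V))).Reachable v w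
              then (1:ℝ) else 0) := by rw [Finset.sum_boole]
        _ = _ := Finset.sum_congr rfl fun w _ => (heq w).symm
    have h2 := (hstep3 v)
    have h3 : c * N * percProb G p {F | c * N ≤ (compCard F v : ℝ)} ≤ C0 := by
      refine h.trans ?_
      exact h2
    rw [le_div_iff₀ hcN]
    linarith [h3]
  -- Step 1 : Markov over vertices
  have hstep1 : c * N * percProb G p {F | ∃ v : V, c * N ≤ (compCard F v : ℝ)}
      ≤ ∑ v : V, percProb G p {F | c * N ≤ (compCard F v : ℝ)} := by
    apply percProb_le_weighted G hp0 hp1 Finset.univ _ _ (c * N)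
    intro F _ hFA
    obtain ⟨v0, hv0⟩ := hFA
    refine le_trans (le_trans hv0 (le_of_eq (compCard_eq_card_filter F v0))) ?_
    have hle : ∀ w : V, (if (SimpleGraph.fromEdgeSet (↑F : Set (Sym2 V))).Reachable v0 w
          then (1:ℝ) else 0)
        ≤ ({F' | c * N ≤ (compCard F' w : ℝ)} : Set (Finset (Sym2 V))).indicator
            (fun _ => (1:ℝ)) F := by
      intro w
      by_cases hr : (SimpleGraph.fromEdgeSet (↑F : Set (Sym2 V))).Reachable v0 w
      · rw [if_pos hr]
        have hmem : F ∈ ({F' | c * N ≤ (compCard F' w : ℝ)} : Set (Finset (Sym2 V))) := by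
          rw [Set.mem_setOf_eq]
          have hcompeq : (compCard F w : ℝ) = (compCard F v0 : ℝ) := by
            have hseteq : {u | (SimpleGraph.fromEdgeSet (↑F : Set (Sym2 V))).Reachable w u}
                = {u | (SimpleGraph.fromEdgeSet (↑F : Set (Sym2 V))).Reachable v0 u} := by
              ext u
              simp only [Set.mem_setOf_eq]
              exact ⟨fun h2 => hr.trans h2, fun h2 => hr.symm.trans h2⟩
            rw [compCard, compCard, hseteq]
          rw [hcompeq]
          exact hv0
        exact (Set.indicator_of_mem hmem (fun _ => (1:ℝ))).ge
      · rw [if_neg hr]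
        exact Set.indicator_nonneg (fun _ _ => zero_le_one) F
    calc ((Finset.univ.filter fun w =>
          (SimpleGraph.fromEdgeSet (↑F : Set (Sym2 V))).Reachable v0 w).card : ℝ)
        = ∑ w : V, (if (SimpleGraph.fromEdgeSet (↑F : Set (Sym2 V))).Reachable v0 w
            then (1:ℝ) else 0) := by rw [Finset.sum_boole]
      _ ≤ _ := Finset.sum_le_sum fun w _ => hle w
  -- combine
  have hsum : ∑ v : V, percProb G p {F | c * N ≤ (compCard F v : ℝ)}
      ≤ N * (C0 / (c * N)) := by
    calc ∑ v : V, percProb G p {F | c * N ≤ (compCard F v : ℝ)}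
        ≤ ∑ _v : V, C0 / (c * N) := Finset.sum_le_sum fun v _ => hstep2 v
      _ = N * (C0 / (c * N)) := by
          rw [Finset.sum_const, Finset.card_univ, nsmul_eq_mul, hNdef]
  have hfinal : percProb G p {F | ∃ v : V, c * N ≤ (compCard F v : ℝ)}
      ≤ C0 / c ^ 2 * ((N:ℝ))⁻¹ := by
    have h1 : c * N * percProb G p {F | ∃ v : V, c * N ≤ (compCard F v : ℝ)}
        ≤ N * (C0 / (c * N)) := hstep1.trans hsum
    have h2 : (N:ℝ) * (C0 / (c * N)) = C0 / c := by
      field_simp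
    rw [h2] at h1
    have h3 : C0 / c ^ 2 * ((N:ℝ))⁻¹ = C0 / c / (c * ↑N) := by
      rw [← div_eq_mul_inv, div_div, div_div, sq]
      ring_nf
    rw [h3, le_div_iff₀ hcN]
    linarith
  exact hfinal

end bridge


theorem subcritical_no_giant_component
    (d : ℕ) (hd : 2 ≤ d)
    (V : ℕ → Type) [∀ n, Fintype (V n)] [∀ n, DecidableEq (V n)]
    (G : ∀ n, SimpleGraph (V n)) [∀ n, DecidableRel (G n).Adj]
    (hreg : ∀ n, (G n).IsRegularOfDegree d)
    (hV : Tendsto (fun n => Fintype.card (V n)) atTop atTop)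
    (p : ℝ) (hp0 : 0 ≤ p) (hp : p < 1 / ((d : ℝ) - 1)) :
    ∀ c > (0 : ℝ), Tendsto (fun n => percProb (G n) p
        {F | ∃ v : V n, c * Fintype.card (V n) ≤ (compCard F v : ℝ)})
      atTop (𝓝 0) := by
  intro c hc
  have hd1 : 1 ≤ d := by omega
  have hdR : (1:ℝ) ≤ (d:ℝ) - 1 := by
    have : (2:ℝ) ≤ (d:ℝ) := by exact_mod_cast hd
    linarith
  set C0 : ℝ := 1 + (d:ℝ) * p * (1 / (1 - ((d:ℝ) - 1) * p)) with hC0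
  have htends : Tendsto (fun n => C0 / c ^ 2 * ((Fintype.card (V n) : ℝ))⁻¹) atTop (𝓝 0) := by
    have h1 : Tendsto (fun n => ((Fintype.card (V n) : ℝ))) atTop atTop :=
      tendsto_natCast_atTop_atTop.comp hV
    have h2 : Tendsto (fun n => ((Fintype.card (V n) : ℝ))⁻¹) atTop (𝓝 0) :=
      h1.inv_tendsto_atTop
    have h3 := h2.const_mul (C0 / c ^ 2)
    simpa using h3
  have hq0 : (0:ℝ) ≤ ((d:ℝ) - 1) * p := mul_nonneg (by linarith) hp0
  have hp1 : p ≤ 1 := by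
    have h1 : 1 / ((d:ℝ) - 1) ≤ 1 := by
      rw [div_le_one (by linarith)]
      linarith
    linarith
  refine tendsto_of_tendsto_of_tendsto_of_le_of_le' tendsto_const_nhds htends ?_ ?_
  · exact Eventually.of_forall fun n => percProb_nonneg (G n) hp0 hp1 _
  · filter_upwards [hV.eventually_ge_atTop 1] with n hN
    exact main_bound (G n) (hreg n) hd hp0 hp hc hN


end
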